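/- Let ν ≠ 0, θ ∈ ℝ, G ∈ [-L, ∞), and let (U, V, W) be a solution of the regularized Fourier X-mode system. Let (a_G, b_G) ∈ ℂ² be the unique solution of a_G A_ν(G) + b_G B_ν(G) = V(G), a_G A_ν'(G) + b_G B_ν'(G) = W(G). Then for all x ∈ [-L, ∞): (i) U(x) − ∫_G^x [(D_x^θ D_z^θ k^ν)(x,z)/(α(x)+iν)] U(z) dz = (a_G (D_x^θ A_ν)(x) + b_G (D_x^θ B_ν)(x))/(α(x)+iν); (ii) V(x) = a_G A_ν(x) + b_G B_ν(x) + ∫_G^x (D_z^θ k^ν)(x,z) U(z) dz; (iii) W(x) = a_G A_ν'(x) + b_G B_ν'(x) + ∫_G^x ∂_x (D_z^θ k^ν)(x,z) U(z) dz. -/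

import Mathlib

open Complex

/-- the kernel `k^ν(x,z) = B_ν(z)A_ν(x) − B_ν(x)A_ν(z)` -/
noncomputable def kker (A B : ℝ → ℂ) (x z : ℝ) : ℂ := B z * A x - B x * A z

/-- `(D_z^θ k^ν)(x,z) = iθ ∂_z k^ν(x,z) − iδ(z) k^ν(x,z)` -/
noncomputable def Dzk (δ : ℝ → ℝ) (θ : ℝ) (A A' B B' : ℝ → ℂ) (x z : ℝ) : ℂ :=
  Complex.I * (θ : ℂ) * (B' z * A x - B x * A' z)
    - Complex.I * (δ z : ℂ) * kker A B x z

/-- `∂_x (D_z^θ k^ν)(x,z)` -/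
noncomputable def pxDzk (δ : ℝ → ℝ) (θ : ℝ) (A A' B B' : ℝ → ℂ) (x z : ℝ) : ℂ :=
  Complex.I * (θ : ℂ) * (B' z * A' x - B' x * A' z)
    - Complex.I * (δ z : ℂ) * (B z * A' x - B' x * A z)

/-- `(D_x^θ D_z^θ k^ν)(x,z) = iθ ∂_x (D_z^θ k^ν)(x,z) − iδ(x) (D_z^θ k^ν)(x,z)` -/
noncomputable def DxDzk (δ : ℝ → ℝ) (θ : ℝ) (A A' B B' : ℝ → ℂ) (x z : ℝ) : ℂ :=
  Complex.I * (θ : ℂ) * pxDzk δ θ A A' B B' x z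
    - Complex.I * (δ x : ℂ) * Dzk δ θ A A' B B' x z

lemma ftc_aux {c : ℝ} {f : ℝ → ℂ} (hf : ContinuousOn f (Set.Ici c)) {G b : ℝ}
    (hG : c ≤ G) (hb : c ≤ b) :
    HasDerivWithinAt (fun u => ∫ z in G..u, f z) (f b) (Set.Ici c) b := by
  have hint : IntervalIntegrable f MeasureTheory.volume G b :=
    (hf.mono (Set.ordConnected_Ici.uIcc_subset hG hb)).intervalIntegrable
  rcases eq_or_lt_of_le hb with h | h
  · subst h
    exact intervalIntegral.integral_hasDerivWithinAt_right hint
      ⟨Set.Ici c, Filter.mem_of_superset self_mem_nhdsWithin Set.Ioi_subset_Ici_self,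
        hf.aestronglyMeasurable measurableSet_Ici⟩
      ((hf c Set.self_mem_Ici).mono Set.Ioi_subset_Ici_self)
  · exact (intervalIntegral.integral_hasDerivAt_right hint
      ⟨Set.Ici c, Ici_mem_nhds h, hf.aestronglyMeasurable measurableSet_Ici⟩
      ((hf b h.le).continuousAt (Ici_mem_nhds h))).hasDerivWithinAt

lemma wronskian_aux {L : ℝ} (hL : 0 < L) {α : ℝ → ℝ} {ν : ℝ} {A A' B B' : ℝ → ℂ}
    (hA : ∀ x, -L ≤ x → HasDerivAt A (A' x) x)
    (hA' : ∀ x, -L ≤ x → HasDerivAt A' (-((α x : ℂ) + Complex.I * (ν : ℂ)) * A x) x)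
    (hB : ∀ x, -L ≤ x → HasDerivAt B (B' x) x)
    (hB' : ∀ x, -L ≤ x → HasDerivAt B' (-((α x : ℂ) + Complex.I * (ν : ℂ)) * B x) x)
    (hA0 : A 0 = 1) (hA'0 : A' 0 = 0) (hB0 : B 0 = 0) (hB'0 : B' 0 = 1) :
    ∀ x, -L ≤ x → A x * B' x - A' x * B x = 1 := by
  intro x hx
  set w : ℝ → ℂ := fun t => A t * B' t - A' t * B t with hw
  have hder : ∀ t, -L ≤ t → HasDerivAt w 0 t := by
    intro t ht
    have h := ((hA t ht).mul (hB' t ht)).sub ((hA' t ht).mul (hB t ht))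
    exact h.congr_deriv (by ring)
  have hconst := constant_of_has_deriv_right_zero
    (f := w) (a := -L) (b := max x 0)
    (fun t ht => (hder t ht.1).continuousAt.continuousWithinAt)
    (fun t ht => (hder t ht.1).hasDerivWithinAt)
  have h1 : w x = w (-L) := hconst x ⟨hx, le_max_left _ _⟩
  have h2 : w 0 = w (-L) := hconst 0 ⟨by linarith, le_max_right _ _⟩
  have h0 : w 0 = 1 := by simp [hw, hA0, hA'0, hB0, hB'0]
  show w x = 1
  rw [h1, ← h2, h0]

/-- Integral representation of any solution of the regularized Fourier X-mode
system (Proposition 3.1 of the paper). -/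
theorem integral_representation_of_solution
    (L : ℝ) (hL : 0 < L)
    (α δ : ℝ → ℝ)
    (hα : ContDiffOn ℝ 2 α (Set.Ici (-L)))
    (hαbd : ∃ C, ∀ x, -L ≤ x → |α x| ≤ C)
    (hα0 : α 0 = 0) (hα'0 : deriv α 0 < 0)
    (hδ : ContDiffOn ℝ 1 δ (Set.Ici (-L)))
    (hδbd : ∃ C, ∀ x, -L ≤ x → |δ x| ≤ C)
    (θ ν : ℝ) (hν : ν ≠ 0)
    -- the solution (U, V, W) of the regularized Fourier X-mode system
    (U V W : ℝ → ℂ)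
    (hVd : ∀ x, -L ≤ x → HasDerivAt V (W x + Complex.I * (θ : ℂ) * U x) x)
    (halg : ∀ x, -L ≤ x →
      Complex.I * (θ : ℂ) * W x - ((α x : ℂ) + Complex.I * (ν : ℂ)) * U x
        - Complex.I * (δ x : ℂ) * V x = 0)
    (hWd : ∀ x, -L ≤ x → HasDerivAt W
      (Complex.I * (δ x : ℂ) * U x - ((α x : ℂ) + Complex.I * (ν : ℂ)) * V x) x)
    -- the fundamental solutions A_ν, B_ν of −u'' − (α+iν)u = 0
    (A A' B B' : ℝ → ℂ)
    (hA : ∀ x, -L ≤ x → HasDerivAt A (A' x) x)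
    (hA' : ∀ x, -L ≤ x → HasDerivAt A' (-((α x : ℂ) + Complex.I * (ν : ℂ)) * A x) x)
    (hB : ∀ x, -L ≤ x → HasDerivAt B (B' x) x)
    (hB' : ∀ x, -L ≤ x → HasDerivAt B' (-((α x : ℂ) + Complex.I * (ν : ℂ)) * B x) x)
    (hA0 : A 0 = 1) (hA'0 : A' 0 = 0) (hB0 : B 0 = 0) (hB'0 : B' 0 = 1)
    -- the reference point G and the integration constants
    (G : ℝ) (hG : -L ≤ G)
    (aG bG : ℂ)
    (hab1 : aG * A G + bG * B G = V G)
    (hab2 : aG * A' G + bG * B' G = W G) :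
    ∀ x, -L ≤ x →
      (U x - (∫ z in G..x, DxDzk δ θ A A' B B' x z / ((α x : ℂ) + Complex.I * (ν : ℂ)) * U z)
        = (aG * (Complex.I * (θ : ℂ) * A' x - Complex.I * (δ x : ℂ) * A x)
            + bG * (Complex.I * (θ : ℂ) * B' x - Complex.I * (δ x : ℂ) * B x))
          / ((α x : ℂ) + Complex.I * (ν : ℂ)))
      ∧ (V x = aG * A x + bG * B x + ∫ z in G..x, Dzk δ θ A A' B B' x z * U z)
      ∧ (W x = aG * A' x + bG * B' x + ∫ z in G..x, pxDzk δ θ A A' B B' x z * U z) := by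
  have hc0 : ∀ t : ℝ, ((α t : ℂ) + Complex.I * (ν : ℂ)) ≠ 0 := by
    intro t h
    apply hν
    have := congrArg Complex.im h
    simpa using this
  -- continuity facts on Ici (-L)
  have hVc : ContinuousOn V (Set.Ici (-L)) :=
    fun t ht => (hVd t ht).continuousAt.continuousWithinAt
  have hWc : ContinuousOn W (Set.Ici (-L)) :=
    fun t ht => (hWd t ht).continuousAt.continuousWithinAt
  have hAc : ContinuousOn A (Set.Ici (-L)) :=
    fun t ht => (hA t ht).continuousAt.continuousWithinAt
  have hA'c : ContinuousOn A' (Set.Ici (-L)) :=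
    fun t ht => (hA' t ht).continuousAt.continuousWithinAt
  have hBc : ContinuousOn B (Set.Ici (-L)) :=
    fun t ht => (hB t ht).continuousAt.continuousWithinAt
  have hB'c : ContinuousOn B' (Set.Ici (-L)) :=
    fun t ht => (hB' t ht).continuousAt.continuousWithinAt
  have hδc : ContinuousOn (fun t => (δ t : ℂ)) (Set.Ici (-L)) :=
    Complex.continuous_ofReal.comp_continuousOn hδ.continuousOn
  have hαc : ContinuousOn (fun t => (α t : ℂ)) (Set.Ici (-L)) :=
    Complex.continuous_ofReal.comp_continuousOn hα.continuousOn
  have hcc : ContinuousOn (fun t => (α t : ℂ) + Complex.I * (ν : ℂ)) (Set.Ici (-L)) :=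
    hαc.add continuousOn_const
  have hUc : ContinuousOn U (Set.Ici (-L)) := by
    have hg : ContinuousOn
        (fun t => (Complex.I * (θ : ℂ) * W t - Complex.I * (δ t : ℂ) * V t)
          / ((α t : ℂ) + Complex.I * (ν : ℂ))) (Set.Ici (-L)) :=
      ((continuousOn_const.mul hWc).sub ((continuousOn_const.mul hδc).mul hVc)).div hcc
        (fun t _ => hc0 t)
    apply hg.congr
    intro t ht
    rw [eq_div_iff (hc0 t)]
    linear_combination -(halg t ht)
  set p : ℝ → ℂ :=
    fun z => (Complex.I * (θ : ℂ) * B' z - Complex.I * (δ z : ℂ) * B z) * U z with hpdef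
  set q : ℝ → ℂ :=
    fun z => (Complex.I * (θ : ℂ) * A' z - Complex.I * (δ z : ℂ) * A z) * U z with hqdef
  have hpc : ContinuousOn p (Set.Ici (-L)) :=
    ((continuousOn_const.mul hB'c).sub ((continuousOn_const.mul hδc).mul hBc)).mul hUc
  have hqc : ContinuousOn q (Set.Ici (-L)) :=
    ((continuousOn_const.mul hA'c).sub ((continuousOn_const.mul hδc).mul hAc)).mul hUc
  set P : ℝ → ℂ := fun u => ∫ z in G..u, p z with hPdef
  set Q : ℝ → ℂ := fun u => ∫ z in G..u, q z with hQdef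
  have hPd : ∀ t, -L ≤ t → HasDerivWithinAt P (p t) (Set.Ici (-L)) t :=
    fun t ht => ftc_aux hpc hG ht
  have hQd : ∀ t, -L ≤ t → HasDerivWithinAt Q (q t) (Set.Ici (-L)) t :=
    fun t ht => ftc_aux hqc hG ht
  have hw := wronskian_aux hL hA hA' hB hB' hA0 hA'0 hB0 hB'0
  set Vt : ℝ → ℂ := fun t => aG * A t + bG * B t + (A t * P t - B t * Q t) with hVtdef
  set Wt : ℝ → ℂ := fun t => aG * A' t + bG * B' t + (A' t * P t - B' t * Q t) with hWtdef
  have hVtd : ∀ t, -L ≤ t →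
      HasDerivWithinAt Vt (Wt t + Complex.I * (θ : ℂ) * U t) (Set.Ici (-L)) t := by
    intro t ht
    have h := ((((hA t ht).const_mul aG).add ((hB t ht).const_mul bG)).hasDerivWithinAt).add
      (((hA t ht).hasDerivWithinAt.mul (hPd t ht)).sub
        ((hB t ht).hasDerivWithinAt.mul (hQd t ht)))
    have he : Wt t + Complex.I * (θ : ℂ) * U t
        = aG * A' t + bG * B' t + ((A' t * P t + A t * p t) - (B' t * Q t + B t * q t)) := by
      have hw1 := hw t ht
      simp only [hWtdef, hpdef, hqdef]
      linear_combination (-(Complex.I * (θ : ℂ) * U t)) * hw1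
    rw [he]
    exact h
  have hWtd : ∀ t, -L ≤ t →
      HasDerivWithinAt Wt (Complex.I * (δ t : ℂ) * U t
        - ((α t : ℂ) + Complex.I * (ν : ℂ)) * Vt t) (Set.Ici (-L)) t := by
    intro t ht
    have h := ((((hA' t ht).const_mul aG).add ((hB' t ht).const_mul bG)).hasDerivWithinAt).add
      (((hA' t ht).hasDerivWithinAt.mul (hPd t ht)).sub
        ((hB' t ht).hasDerivWithinAt.mul (hQd t ht)))
    have he : Complex.I * (δ t : ℂ) * U t - ((α t : ℂ) + Complex.I * (ν : ℂ)) * Vt t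
        = aG * (-((α t : ℂ) + Complex.I * (ν : ℂ)) * A t)
          + bG * (-((α t : ℂ) + Complex.I * (ν : ℂ)) * B t)
          + ((-((α t : ℂ) + Complex.I * (ν : ℂ)) * A t * P t + A' t * p t)
            - (-((α t : ℂ) + Complex.I * (ν : ℂ)) * B t * Q t + B' t * q t)) := by
      have hw1 := hw t ht
      simp only [hVtdef, hpdef, hqdef]
      linear_combination (-(Complex.I * (δ t : ℂ) * U t)) * hw1
    rw [he]
    exact h
  -- ODE uniqueness
  obtain ⟨Cα, hCα⟩ := hαbd
  have hCα0 : 0 ≤ Cα := le_trans (abs_nonneg _) (hCα (-L) le_rfl)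
  set K : NNReal := Real.toNNReal (max 1 (Cα + |ν|)) with hKdef
  have hK : (K : ℝ) = max 1 (Cα + |ν|) :=
    Real.coe_toNNReal _ (le_trans zero_le_one (le_max_left _ _))
  have hK1 : (1 : ℝ) ≤ K := by rw [hK]; exact le_max_left _ _
  set v : ℝ → ℂ × ℂ → ℂ × ℂ :=
    fun t pp => (pp.2, -((α (max t (-L)) : ℂ) + Complex.I * (ν : ℂ)) * pp.1) with hvdef
  have hvK : ∀ t, LipschitzWith K (v t) := by
    intro t
    apply LipschitzWith.of_dist_le_mul
    intro pp qq
    rw [Prod.dist_eq]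
    have hM : dist pp.1 qq.1 ≤ dist pp qq := by rw [Prod.dist_eq]; exact le_max_left _ _
    have hM2 : dist pp.2 qq.2 ≤ dist pp qq := by rw [Prod.dist_eq]; exact le_max_right _ _
    have hnorm : ‖-((α (max t (-L)) : ℂ) + Complex.I * (ν : ℂ))‖ ≤ Cα + |ν| := by
      rw [norm_neg]
      refine le_trans (norm_add_le _ _) ?_
      have h1 : ‖((α (max t (-L)) : ℝ) : ℂ)‖ = |α (max t (-L))| := by simp
      have h2 : ‖Complex.I * (ν : ℂ)‖ = |ν| := by simp
      rw [h1, h2]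
      exact add_le_add (hCα _ (le_max_right _ _)) le_rfl
    have hKd : Cα + |ν| ≤ (K : ℝ) := by rw [hK]; exact le_max_right _ _
    apply max_le
    · simp only [hvdef]
      calc dist pp.2 qq.2 ≤ dist pp qq := hM2
        _ ≤ (K : ℝ) * dist pp qq := le_mul_of_one_le_left dist_nonneg hK1
    · simp only [hvdef]
      rw [dist_eq_norm, ← mul_sub, norm_mul]
      calc ‖-((α (max t (-L)) : ℂ) + Complex.I * (ν : ℂ))‖ * ‖pp.1 - qq.1‖
          ≤ (Cα + |ν|) * dist pp.1 qq.1 := by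
            rw [dist_eq_norm]
            exact mul_le_mul_of_nonneg_right hnorm (norm_nonneg _)
        _ ≤ (K : ℝ) * dist pp qq := by
            apply mul_le_mul hKd hM dist_nonneg
            exact le_trans (by positivity) hKd
  set F : ℝ → ℂ × ℂ := fun t => (V t - Vt t, W t - Wt t) with hFdef
  have hFd : ∀ t, -L ≤ t → HasDerivWithinAt F (v t (F t)) (Set.Ici (-L)) t := by
    intro t ht
    have h1 : HasDerivWithinAt (fun u => V u - Vt u) (W t - Wt t) (Set.Ici (-L)) t := by
      have h := (hVd t ht).hasDerivWithinAt.sub (hVtd t ht)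
      have : W t + Complex.I * (θ : ℂ) * U t - (Wt t + Complex.I * (θ : ℂ) * U t)
          = W t - Wt t := by ring
      rwa [this] at h
    have h2 : HasDerivWithinAt (fun u => W u - Wt u)
        (-((α t : ℂ) + Complex.I * (ν : ℂ)) * (V t - Vt t)) (Set.Ici (-L)) t := by
      have h := (hWd t ht).hasDerivWithinAt.sub (hWtd t ht)
      have : (Complex.I * (δ t : ℂ) * U t - ((α t : ℂ) + Complex.I * (ν : ℂ)) * V t)
          - (Complex.I * (δ t : ℂ) * U t - ((α t : ℂ) + Complex.I * (ν : ℂ)) * Vt t)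
          = -((α t : ℂ) + Complex.I * (ν : ℂ)) * (V t - Vt t) := by ring
      rwa [this] at h
    have h := h1.prodMk h2
    have he : v t (F t) = (W t - Wt t, -((α t : ℂ) + Complex.I * (ν : ℂ)) * (V t - Vt t)) := by
      simp only [hvdef, hFdef, max_eq_left ht]
    rw [he]
    exact h
  have hFG : F G = 0 := by
    have hPG : P G = 0 := by simp only [hPdef]; exact intervalIntegral.integral_same
    have hQG : Q G = 0 := by simp only [hQdef]; exact intervalIntegral.integral_same
    simp only [hFdef, hVtdef, hWtdef, hPG, hQG, mul_zero, sub_zero, add_zero,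
      Prod.mk_eq_zero, sub_eq_zero]
    exact ⟨hab1.symm, hab2.symm⟩
  have key : ∀ t, -L ≤ t → F t = 0 := by
    intro t ht
    rcases le_total G t with hGt | hGt
    · have huniq := ODE_solution_unique (v := v) (K := K) hvK
        (f := F) (g := fun _ => (0 : ℂ × ℂ)) (a := G) (b := t)
        (fun u hu => ((hFd u (le_trans hG hu.1)).continuousWithinAt).mono
          (fun y hy => le_trans hG hy.1))
        (fun u hu => (hFd u (le_trans hG hu.1)).mono
          (Set.Ici_subset_Ici.mpr (le_trans hG hu.1)))
        continuousOn_const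
        (fun u hu => by
          have h0 : v u ((fun _ => (0 : ℂ × ℂ)) u) = 0 := by simp [hvdef]
          rw [h0]
          exact hasDerivWithinAt_const _ _ _)
        hFG
      exact huniq (Set.right_mem_Icc.mpr hGt)
    · have huniq := ODE_solution_unique_of_mem_Icc_left (v := v) (K := K)
        (s := fun _ => Set.univ) (fun u _ => (hvK u).lipschitzOnWith)
        (f := F) (g := fun _ => (0 : ℂ × ℂ)) (a := t) (b := G)
        (fun u hu => ((hFd u (le_trans ht hu.1)).continuousWithinAt).mono
          (fun y hy => le_trans ht hy.1))
        (fun u hu => by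
          have hu' : -L < u := lt_of_le_of_lt ht hu.1
          exact ((hFd u hu'.le).hasDerivAt (Ici_mem_nhds hu')).hasDerivWithinAt)
        (fun u _ => trivial)
        continuousOn_const
        (fun u hu => by
          have h0 : v u ((fun _ => (0 : ℂ × ℂ)) u) = 0 := by simp [hvdef]
          rw [h0]
          exact hasDerivWithinAt_const _ _ _)
        (fun u _ => trivial)
        hFG
      exact huniq (Set.left_mem_Icc.mpr hGt)
  -- conclusion
  intro x hx
  have hx' := key x hx
  simp only [hFdef, Prod.mk_eq_zero, sub_eq_zero] at hx'
  obtain ⟨hVx, hWx⟩ := hx'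
  have hVxe : V x = aG * A x + bG * B x + (A x * P x - B x * Q x) := by
    rw [hVx]
  have hWxe : W x = aG * A' x + bG * B' x + (A' x * P x - B' x * Q x) := by
    rw [hWx]
  have hpint : IntervalIntegrable p MeasureTheory.volume G x :=
    (hpc.mono (Set.ordConnected_Ici.uIcc_subset hG hx)).intervalIntegrable
  have hqint : IntervalIntegrable q MeasureTheory.volume G x :=
    (hqc.mono (Set.ordConnected_Ici.uIcc_subset hG hx)).intervalIntegrable
  have hlin : ∀ C1 C2 : ℂ, (∫ z in G..x, (C1 * p z - C2 * q z)) = C1 * P x - C2 * Q x := by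
    intro C1 C2
    rw [intervalIntegral.integral_sub (hpint.const_mul _) (hqint.const_mul _),
      intervalIntegral.integral_const_mul, intervalIntegral.integral_const_mul]
  have eD : ∀ z : ℝ, Dzk δ θ A A' B B' x z * U z = A x * p z - B x * q z := by
    intro z; simp only [Dzk, kker, hpdef, hqdef]; ring
  have eP : ∀ z : ℝ, pxDzk δ θ A A' B B' x z * U z = A' x * p z - B' x * q z := by
    intro z; simp only [pxDzk, hpdef, hqdef]; ring
  have hIV : (∫ z in G..x, Dzk δ θ A A' B B' x z * U z) = A x * P x - B x * Q x := by
    simp only [eD]; exact hlin (A x) (B x)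
  have hIW : (∫ z in G..x, pxDzk δ θ A A' B B' x z * U z) = A' x * P x - B' x * Q x := by
    simp only [eP]; exact hlin (A' x) (B' x)
  have eX : ∀ z : ℝ, DxDzk δ θ A A' B B' x z / ((α x : ℂ) + Complex.I * (ν : ℂ)) * U z
      = ((α x : ℂ) + Complex.I * (ν : ℂ))⁻¹
        * ((Complex.I * (θ : ℂ) * A' x - Complex.I * (δ x : ℂ) * A x) * p z
          - (Complex.I * (θ : ℂ) * B' x - Complex.I * (δ x : ℂ) * B x) * q z) := by
    intro z; simp only [DxDzk, pxDzk, Dzk, kker, hpdef, hqdef]; ring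
  have hIX : (∫ z in G..x, DxDzk δ θ A A' B B' x z / ((α x : ℂ) + Complex.I * (ν : ℂ)) * U z)
      = ((α x : ℂ) + Complex.I * (ν : ℂ))⁻¹
        * ((Complex.I * (θ : ℂ) * A' x - Complex.I * (δ x : ℂ) * A x) * P x
          - (Complex.I * (θ : ℂ) * B' x - Complex.I * (δ x : ℂ) * B x) * Q x) := by
    simp only [eX]
    rw [intervalIntegral.integral_const_mul, hlin]
  refine ⟨?_, ?_, ?_⟩
  · rw [hIX, eq_div_iff (hc0 x)]
    have hUx : ((α x : ℂ) + Complex.I * (ν : ℂ)) * U x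
        = Complex.I * (θ : ℂ) * W x - Complex.I * (δ x : ℂ) * V x := by
      linear_combination -(halg x hx)
    have hinv : ((α x : ℂ) + Complex.I * (ν : ℂ))⁻¹ * ((α x : ℂ) + Complex.I * (ν : ℂ)) = 1 :=
      inv_mul_cancel₀ (hc0 x)
    linear_combination hUx + Complex.I * (θ : ℂ) * hWxe - Complex.I * (δ x : ℂ) * hVxe
      - ((Complex.I * (θ : ℂ) * A' x - Complex.I * (δ x : ℂ) * A x) * P x
        - (Complex.I * (θ : ℂ) * B' x - Complex.I * (δ x : ℂ) * B x) * Q x) * hinv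
  · rw [hIV]; exact hVxe
  · rw [hIW]; exact hWxe
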